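/- Let p ≥ 2 and k be integers with k ≥ 2p and (p,k) ≠ (2,4). Then 1 − p/k > (2/k)^p + (1 − 2/k)^p. -/

import Mathlib

/-- Quadratic upper bound: `(1-x)^n ≤ 1 - n x + n(n-1)/2 x²` for `x ∈ [0,1]`. -/
lemma quad_bernoulli (n : ℕ) (x : ℝ) (hx0 : 0 ≤ x) (hx1 : x ≤ 1) :
    (1 - x) ^ n ≤ 1 - n * x + (n : ℝ) * ((n : ℝ) - 1) / 2 * x ^ 2 := by
  induction n with
  | zero => norm_num
  | succ n ih =>
    have h1x : 0 ≤ 1 - x := by linarith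
    have hC : 0 ≤ (n : ℝ) * ((n : ℝ) - 1) := by
      rcases Nat.eq_zero_or_pos n with h | h
      · simp [h]
      · have : (1 : ℝ) ≤ n := by exact_mod_cast h
        nlinarith
    have := mul_le_mul_of_nonneg_left ih h1x
    calc (1 - x) ^ (n + 1) = (1 - x) * (1 - x) ^ n := by ring
      _ ≤ (1 - x) * (1 - n * x + (n : ℝ) * ((n : ℝ) - 1) / 2 * x ^ 2) := this
      _ ≤ 1 - (n + 1 : ℕ) * x + ((n + 1 : ℕ) : ℝ) * (((n + 1 : ℕ) : ℝ) - 1) / 2 * x ^ 2 := by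
          push_cast
          nlinarith [mul_nonneg hC (mul_nonneg hx0 (mul_nonneg hx0 hx0))]

/-- For integers `p ≥ 2`, `k ≥ 2p` with `(p, k) ≠ (2, 4)`, one has
`1 - p/k > (2/k)^p + (1 - 2/k)^p`. -/
theorem one_sub_div_gt_pow_add_pow (p k : ℕ) (hp : 2 ≤ p) (hk : 2 * p ≤ k)
    (hne : (p, k) ≠ (2, 4)) :
    (2 / (k : ℝ)) ^ p + (1 - 2 / (k : ℝ)) ^ p < 1 - (p : ℝ) / k := by
  have hk0 : 0 < k := by omega
  have hkR : (0 : ℝ) < k := by exact_mod_cast hk0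
  set x : ℝ := 2 / k with hxdef
  have hx0 : 0 < x := by positivity
  have hxP : x * p ≤ 1 := by
    rw [hxdef, div_mul_eq_mul_div, div_le_one hkR]
    have : (2 * p : ℕ) ≤ (k : ℕ) := hk
    exact_mod_cast this
  have hx1 : x ≤ 1 := by
    have hpR : (1 : ℝ) ≤ p := by exact_mod_cast (by omega : 1 ≤ p)
    nlinarith
  have hpk : (p : ℝ) / k = (p : ℝ) * x / 2 := by
    rw [hxdef]; field_simp
  rw [hpk]
  rcases eq_or_lt_of_le hp with hp2 | hp3
  · -- p = 2, so k ≥ 5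
    have hk5 : 5 ≤ k := by
      rcases Nat.lt_or_ge k 5 with h | h
      · exfalso; apply hne; rw [← hp2]; subst hp2; simp; omega
      · exact h
    have hk5R : (5 : ℝ) ≤ k := by exact_mod_cast hk5
    have hx25 : x ≤ 2 / 5 := by
      rw [hxdef]
      rw [div_le_div_iff₀ hkR (by norm_num)]
      linarith
    rw [← hp2]
    push_cast
    nlinarith
  · -- p ≥ 3
    have hp3' : 3 ≤ p := hp3
    have hP : (3 : ℝ) ≤ p := by exact_mod_cast hp3'
    have h1 : (1 - x) ^ p ≤ 1 - p * x + (p : ℝ) * ((p : ℝ) - 1) / 2 * x ^ 2 :=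
      quad_bernoulli p x hx0.le hx1
    have h2 : x ^ p ≤ x ^ 3 := pow_le_pow_of_le_one hx0.le hx1 hp3'
    have key : x ^ 3 + (p : ℝ) * ((p : ℝ) - 1) / 2 * x ^ 2 < (p : ℝ) * x / 2 := by
      nlinarith [mul_pos hx0 hx0, sq_nonneg (x * p - 1), mul_pos (mul_pos hx0 hx0) hx0,
        mul_nonneg (mul_nonneg hx0.le hx0.le) (sub_nonneg.mpr hxP)]
    linarith
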